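/- Let H be a symmetric positive definite n×n matrix, and suppose for all x ∈ ℝⁿ and all f with |f| ≤ 1 we have xᵀH(Ax+Bf) + ε(xᵀHx - 1) ≤ 0 for some ε > 0. Let x(t) be an absolutely continuous solution of dx/dt = A x + B f(t) with measurable f satisfying |f(t)| ≤ 1 for all t. If x(0)ᵀ H x(0) ≤ 1, then x(t)ᵀ H x(t) ≤ 1 for all t ≥ 0 (the ellipsoid E = {x : xᵀHx ≤ 1} is forward invariant). -/

import Mathlib

open Matrix

/-- Forward invariance of the ellipsoid `E = {x : xᵀHx ≤ 1}` for solutions of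
`dx/dt = Ax + Bf(t)` with `|f(t)| ≤ 1`, under the quadratic Lyapunov condition. -/
theorem stmt_6 {n : ℕ} (A H : Matrix (Fin n) (Fin n) ℝ) (B : Fin n → ℝ) (ε : ℝ)
    (hε : 0 < ε) (hH : H.IsSymm) (hHpd : H.PosDef)
    (hsector : ∀ (x : Fin n → ℝ) (f : ℝ), |f| ≤ 1 →
      x ⬝ᵥ H.mulVec (A.mulVec x + f • B) + ε * (x ⬝ᵥ H.mulVec x - 1) ≤ 0)
    (x : ℝ → Fin n → ℝ) (f : ℝ → ℝ)
    (hf : ∀ t, |f t| ≤ 1)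
    (hx : ∀ t, 0 ≤ t → HasDerivAt x (A.mulVec (x t) + f t • B) t)
    (h0 : x 0 ⬝ᵥ H.mulVec (x 0) ≤ 1) :
    ∀ t, 0 ≤ t → x t ⬝ᵥ H.mulVec (x t) ≤ 1 := by
  intro t ht
  -- symmetry of the quadratic form
  have hsym : ∀ a b : Fin n → ℝ, a ⬝ᵥ H.mulVec b = b ⬝ᵥ H.mulVec a := by
    intro a b
    simp only [dotProduct, mulVec, Finset.mul_sum]
    rw [Finset.sum_comm]
    refine Finset.sum_congr rfl fun j _ => Finset.sum_congr rfl fun i _ => ?_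
    have hij : H i j = H j i := hH.apply j i
    rw [hij]; ring
  set V : ℝ → ℝ := fun s => x s ⬝ᵥ H.mulVec (x s) with hVdef
  have hVd : ∀ s, 0 ≤ s →
      HasDerivAt V (2 * (x s ⬝ᵥ H.mulVec (A.mulVec (x s) + f s • B))) s := by
    intro s hs
    have hxs := hx s hs
    set v := A.mulVec (x s) + f s • B with hv
    have hcoord : ∀ i, HasDerivAt (fun u => x u i) (v i) s := fun i =>
      hasDerivAt_pi.mp hxs i
    have hsum : HasDerivAt (fun u => ∑ i, x u i * ∑ j, H i j * x u j)
        (∑ i, (v i * ∑ j, H i j * x s j + x s i * ∑ j, H i j * v j)) s := by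
      refine HasDerivAt.fun_sum fun i _ => ?_
      exact (hcoord i).mul (HasDerivAt.fun_sum fun j _ => (hcoord j).const_mul (H i j))
    have hfun : V = fun u => ∑ i, x u i * ∑ j, H i j * x u j := by
      funext u; simp [V, dotProduct, mulVec]
    rw [hfun]
    convert hsum using 1
    have h1 : v ⬝ᵥ H.mulVec (x s) = ∑ i, v i * ∑ j, H i j * x s j := by
      simp [dotProduct, mulVec]
    have h2 : x s ⬝ᵥ H.mulVec v = ∑ i, x s i * ∑ j, H i j * v j := by
      simp [dotProduct, mulVec]
    rw [Finset.sum_add_distrib, ← h1, ← h2, hsym (x s) v]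
    ring
  set c : ℝ := 2 * ε with hc
  set g : ℝ → ℝ := fun s => (V s - 1) * Real.exp (c * s) with hg
  have hgd : ∀ s, 0 ≤ s →
      HasDerivAt g ((2 * (x s ⬝ᵥ H.mulVec (A.mulVec (x s) + f s • B))) * Real.exp (c * s)
        + (V s - 1) * (Real.exp (c * s) * c)) s := by
    intro s hs
    have he : HasDerivAt (fun u => Real.exp (c * u)) (Real.exp (c * s) * c) s := by
      have h1 : HasDerivAt (fun u : ℝ => c * u) c s := by
        simpa using (hasDerivAt_id s).const_mul c
      exact (Real.hasDerivAt_exp (c * s)).comp s h1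
    exact ((hVd s hs).sub_const 1).mul he
  have hanti : AntitoneOn g (Set.Ici (0 : ℝ)) := by
    refine antitoneOn_of_deriv_nonpos (convex_Ici 0)
      (fun s hs => ((hgd s hs).continuousAt).continuousWithinAt)
      (fun s hs => ?_) (fun s hs => ?_)
    · rw [interior_Ici] at hs
      exact ((hgd s hs.le).differentiableAt).differentiableWithinAt
    · rw [interior_Ici] at hs
      rw [(hgd s hs.le).deriv]
      have hsec := hsector (x s) (f s) (hf s)
      have hep : (0:ℝ) < Real.exp (c * s) := Real.exp_pos _
      have hVs : V s = x s ⬝ᵥ H.mulVec (x s) := rfl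
      have hcs : c = 2 * ε := rfl
      rw [hVs, hcs]
      nlinarith [hep, hsec]
  have hgle : g t ≤ g 0 := hanti Set.self_mem_Ici ht ht
  have hg0 : g 0 = V 0 - 1 := by simp [g]
  have hep : (0:ℝ) < Real.exp (c * t) := Real.exp_pos _
  have : (V t - 1) * Real.exp (c * t) ≤ V 0 - 1 := by rwa [hg0] at hgle
  have hV0 : V 0 - 1 ≤ 0 := by simpa [V] using sub_nonpos.mpr h0
  nlinarith [this, hV0, hep]
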